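/- (Lemma 1) The normalized thermodynamic integral up to any point t ∈ (0,1), NTI(t) = ∫₀^t ∫_Θ p_s(θ) log(p₁(θ)/p₀(θ)) dν(θ) ds, equals log μ(t), and hence equals minus the Chernoff t-divergence of the endpoint densities: NTI(t) = log μ(t) = −C_t(p₁ ‖ p₀). -/

import Mathlib

open MeasureTheory Real

lemma rpow_le_add_rpow' {c a b u : ℝ} (hc : 0 < c) (hau : a ≤ u) (hub : u ≤ b) :
    c ^ u ≤ c ^ a + c ^ b := by
  rcases le_total 1 c with h | h
  · have h1 := Real.rpow_le_rpow_of_exponent_le h hub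
    have ha : 0 < c ^ a := Real.rpow_pos_of_pos hc a
    linarith
  · have h1 := Real.rpow_le_rpow_of_exponent_ge hc h hau
    have hb : 0 < c ^ b := Real.rpow_pos_of_pos hc b
    linarith

lemma geom_path_eq' {p0 p1 : ℝ} (h0 : 0 < p0) (h1 : 0 < p1) (s : ℝ) :
    p1 ^ s * p0 ^ (1 - s) = p0 * (p1 / p0) ^ s := by
  rw [Real.div_rpow h1.le h0.le, Real.rpow_sub h0, Real.rpow_one]
  have hps : (p0 : ℝ) ^ s ≠ 0 := (Real.rpow_pos_of_pos h0 s).ne'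
  field_simp

lemma geom_path_le' {p0 p1 a b u : ℝ} (h0 : 0 < p0) (h1 : 0 < p1)
    (hau : a ≤ u) (hub : u ≤ b) :
    p1 ^ u * p0 ^ (1 - u) ≤ p1 ^ a * p0 ^ (1 - a) + p1 ^ b * p0 ^ (1 - b) := by
  rw [geom_path_eq' h0 h1, geom_path_eq' h0 h1, geom_path_eq' h0 h1, ← mul_add]
  exact mul_le_mul_of_nonneg_left (rpow_le_add_rpow' (div_pos h1 h0) hau hub) h0.le

lemma hasDerivAt_geom_path' {p0 p1 : ℝ} (h0 : 0 < p0) (h1 : 0 < p1) (u : ℝ) :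
    HasDerivAt (fun s : ℝ => p1 ^ s * p0 ^ (1 - s))
      (p1 ^ u * p0 ^ (1 - u) * Real.log (p1 / p0)) u := by
  have h1' := (hasDerivAt_const u p1).rpow (hasDerivAt_id u) h1
  have h0' := (hasDerivAt_const u p0).rpow ((hasDerivAt_id u).const_sub 1) h0
  have := h1'.mul h0'
  refine this.congr_deriv ?_
  rw [Real.log_div h1.ne' h0.ne']
  simp only [id_eq]
  ring

/-- (Lemma 1) The normalized thermodynamic integral up to any point `t ∈ (0,1)` equals
`log μ(t)`, i.e. minus the Chernoff `t`-divergence of the endpoint densities. -/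
theorem NTI_eq_log_chernoff_coefficient
    {Θ : Type*} [MeasurableSpace Θ] (ν : Measure Θ) [SigmaFinite ν]
    (p0 p1 : Θ → ℝ)
    (hp0pos : ∀ᵐ θ ∂ν, 0 < p0 θ) (hp1pos : ∀ᵐ θ ∂ν, 0 < p1 θ)
    (hp0int : ∫ θ, p0 θ ∂ν = 1) (hp1int : ∫ θ, p1 θ ∂ν = 1)
    (μc : ℝ → ℝ) (hμc : ∀ t, μc t = ∫ θ, p1 θ ^ t * p0 θ ^ (1 - t) ∂ν)
    (hμint : ∀ t ∈ Set.Icc (0:ℝ) 1,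
      Integrable (fun θ => p1 θ ^ t * p0 θ ^ (1 - t)) ν)
    (hμpos : ∀ t ∈ Set.Icc (0:ℝ) 1, 0 < μc t)
    (hdom : Integrable
      (fun x : ℝ × Θ =>
        (p1 x.2 ^ x.1 * p0 x.2 ^ (1 - x.1) / μc x.1) * |Real.log (p1 x.2 / p0 x.2)|)
      ((volume.restrict (Set.Icc (0:ℝ) 1)).prod ν))
    (t : ℝ) (ht : t ∈ Set.Ioo (0:ℝ) 1)
    (C : ℝ) (hC : C = -Real.log (μc t)) :
    (∫ s in (0:ℝ)..t, ∫ θ,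
        (p1 θ ^ s * p0 θ ^ (1 - s) / μc s) * Real.log (p1 θ / p0 θ) ∂ν)
      = Real.log (μc t) ∧
    (∫ s in (0:ℝ)..t, ∫ θ,
        (p1 θ ^ s * p0 θ ^ (1 - s) / μc s) * Real.log (p1 θ / p0 θ) ∂ν)
      = -C := by
  obtain ⟨ht0, ht1⟩ := ht
  have hpp : ∀ᵐ θ ∂ν, 0 < p0 θ ∧ 0 < p1 θ := hp0pos.and hp1pos
  -- measurability of the densities
  have hp0m : AEStronglyMeasurable p0 ν := by
    have := (hμint 0 (by norm_num)).aestronglyMeasurable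
    simpa using this
  have hp1m : AEStronglyMeasurable p1 ν := by
    have := (hμint 1 (by norm_num)).aestronglyMeasurable
    simpa using this
  have hLm : AEMeasurable (fun θ => Real.log (p1 θ / p0 θ)) ν :=
    Real.measurable_log.comp_aemeasurable (hp1m.aemeasurable.div hp0m.aemeasurable)
  -- integrability of the densities
  have hp0i : Integrable p0 ν := by
    by_contra h
    rw [integral_undef h] at hp0int
    exact one_ne_zero hp0int.symm
  have hp1i : Integrable p1 ν := by
    by_contra h
    rw [integral_undef h] at hp1int
    exact one_ne_zero hp1int.symm
  -- product measure facts
  set ρ := (volume.restrict (Set.Icc (0:ℝ) 1)).prod ν with hρdef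
  have hsnd : Measure.QuasiMeasurePreserving (Prod.snd : ℝ × Θ → Θ) ρ ν :=
    Measure.quasiMeasurePreserving_snd
  have hfst : Measure.QuasiMeasurePreserving (Prod.fst : ℝ × Θ → ℝ) ρ
      (volume.restrict (Set.Icc (0:ℝ) 1)) :=
    Measure.quasiMeasurePreserving_fst
  have haeIcc : ∀ᵐ x : ℝ × Θ ∂ρ, x.1 ∈ Set.Icc (0:ℝ) 1 :=
    hfst.tendsto_ae.eventually (ae_restrict_mem measurableSet_Icc)
  have haepp : ∀ᵐ x : ℝ × Θ ∂ρ, 0 < p0 x.2 ∧ 0 < p1 x.2 :=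
    hsnd.tendsto_ae.eventually hpp
  -- the parametric integrand `K` and its absolute version
  set K : ℝ × Θ → ℝ := fun x =>
    (p1 x.2 ^ x.1 * p0 x.2 ^ (1 - x.1) / μc x.1) * Real.log (p1 x.2 / p0 x.2) with hKdef
  have hKsgn : ∀ x : ℝ × Θ, K x =
      ((p1 x.2 ^ x.1 * p0 x.2 ^ (1 - x.1) / μc x.1) * |Real.log (p1 x.2 / p0 x.2)|) *
        (if Real.log (p1 x.2 / p0 x.2) < 0 then (-1:ℝ) else 1) := by
    intro x
    by_cases h : Real.log (p1 x.2 / p0 x.2) < 0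
    · simp only [hKdef, h, if_true, abs_of_neg h]
      ring
    · simp only [hKdef, h, if_false, abs_of_nonneg (not_lt.1 h), mul_one]
  obtain ⟨L', hL'm, hLL'⟩ := hLm
  have hsgnm : AEStronglyMeasurable
      (fun x : ℝ × Θ => if Real.log (p1 x.2 / p0 x.2) < 0 then (-1:ℝ) else 1) ρ := by
    have hm : Measurable (fun x : ℝ × Θ => if L' x.2 < 0 then (-1:ℝ) else 1) :=
      Measurable.ite (measurableSet_lt (hL'm.comp measurable_snd) measurable_const)
        measurable_const measurable_const
    refine hm.aestronglyMeasurable.congr ?_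
    filter_upwards [hsnd.tendsto_ae.eventually hLL'] with x hx
    simp only [hx]
  have hKm : AEStronglyMeasurable K ρ := by
    have h1 := hdom.aestronglyMeasurable.mul hsgnm
    refine h1.congr ?_
    exact Filter.Eventually.of_forall fun x => (hKsgn x).symm
  have hKint : Integrable K ρ := by
    refine hdom.mono' hKm ?_
    filter_upwards [haeIcc, haepp] with x hx hpx
    have hnum : 0 < p1 x.2 ^ x.1 * p0 x.2 ^ (1 - x.1) :=
      mul_pos (Real.rpow_pos_of_pos hpx.2 _) (Real.rpow_pos_of_pos hpx.1 _)
    have hμx : 0 < μc x.1 := hμpos x.1 hx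
    have hA0 : 0 ≤ (p1 x.2 ^ x.1 * p0 x.2 ^ (1 - x.1) / μc x.1) *
        |Real.log (p1 x.2 / p0 x.2)| :=
      mul_nonneg (div_nonneg hnum.le hμx.le) (abs_nonneg _)
    rw [hKsgn x, Real.norm_eq_abs, abs_mul]
    have h1 : |if Real.log (p1 x.2 / p0 x.2) < 0 then (-1:ℝ) else 1| = 1 := by
      split <;> norm_num
    rw [h1, mul_one, abs_of_nonneg hA0]
  -- a.e. slice integrability (with |log|)
  have hgood : ∀ᵐ s ∂(volume.restrict (Set.Icc (0:ℝ) 1)),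
      Integrable (fun θ => (p1 θ ^ s * p0 θ ^ (1 - s)) * |Real.log (p1 θ / p0 θ)|) ν := by
    filter_upwards [hdom.prod_right_ae, ae_restrict_mem measurableSet_Icc] with s hs hsIcc
    have hμs : (μc s) ≠ 0 := (hμpos s hsIcc).ne'
    have h2 := hs.const_mul (μc s)
    refine h2.congr (Filter.Eventually.of_forall fun θ => ?_)
    generalize |Real.log (p1 θ / p0 θ)| = l
    field_simp
  -- picking good points in subintervals
  have hpick : ∀ u v : ℝ, 0 ≤ u → u < v → v ≤ 1 →
      ∃ s, Integrable (fun θ => (p1 θ ^ s * p0 θ ^ (1 - s)) * |Real.log (p1 θ / p0 θ)|) ν ∧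
        s ∈ Set.Ioo u v := by
    intro u v hu huv hv1
    by_contra h
    push_neg at h
    have hsub : Set.Ioo u v ⊆ {s : ℝ | ¬ Integrable
        (fun θ => (p1 θ ^ s * p0 θ ^ (1 - s)) * |Real.log (p1 θ / p0 θ)|) ν} := by
      intro s hs hsS
      exact absurd hs (h s hsS)
    have h0 : (volume.restrict (Set.Icc (0:ℝ) 1)) (Set.Ioo u v) = 0 :=
      measure_mono_null hsub (ae_iff.mp hgood)
    rw [Measure.restrict_apply measurableSet_Ioo] at h0
    have hss : Set.Ioo u v ∩ Set.Icc (0:ℝ) 1 = Set.Ioo u v :=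
      Set.inter_eq_left.mpr fun x hx => ⟨hu.trans hx.1.le, hx.2.le.trans hv1⟩
    rw [hss, Real.volume_Ioo] at h0
    simp only [ENNReal.ofReal_eq_zero] at h0
    linarith
  -- the key derivative computation
  have key : ∀ s₀ ∈ Set.Ioo (0:ℝ) t,
      Integrable (fun θ => (p1 θ ^ s₀ * p0 θ ^ (1 - s₀)) * Real.log (p1 θ / p0 θ)) ν ∧
      HasDerivAt μc (∫ θ, (p1 θ ^ s₀ * p0 θ ^ (1 - s₀)) * Real.log (p1 θ / p0 θ) ∂ν) s₀ := by
    intro s₀ hs₀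
    have hs₀Icc : s₀ ∈ Set.Icc (0:ℝ) 1 := ⟨hs₀.1.le, (hs₀.2.trans ht1).le⟩
    obtain ⟨a, haS, haI⟩ := hpick 0 s₀ le_rfl hs₀.1 hs₀Icc.2
    obtain ⟨b, hbS, hbI⟩ := hpick s₀ 1 hs₀.1.le (hs₀.2.trans ht1) le_rfl
    set ε := min (s₀ - a) (b - s₀) with hεdef
    have hε : 0 < ε := lt_min (by linarith [haI.2]) (by linarith [hbI.1])
    have hball : ∀ u ∈ Metric.ball s₀ ε, a ≤ u ∧ u ≤ b := by
      intro u hu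
      rw [Metric.mem_ball, Real.dist_eq, abs_lt] at hu
      constructor
      · have := min_le_left (s₀ - a) (b - s₀); linarith [hu.1]
      · have := min_le_right (s₀ - a) (b - s₀); linarith [hu.2]
    have hres := hasDerivAt_integral_of_dominated_loc_of_deriv_le (μ := ν)
      (F := fun s θ => p1 θ ^ s * p0 θ ^ (1 - s))
      (F' := fun s θ => (p1 θ ^ s * p0 θ ^ (1 - s)) * Real.log (p1 θ / p0 θ))
      (x₀ := s₀)
      (bound := fun θ => (p1 θ ^ a * p0 θ ^ (1 - a) + p1 θ ^ b * p0 θ ^ (1 - b)) *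
        |Real.log (p1 θ / p0 θ)|)
      (Metric.ball_mem_nhds s₀ hε)
      (by
        filter_upwards [Ioo_mem_nhds hs₀.1 (hs₀.2.trans ht1)] with u hu
        exact (hμint u ⟨hu.1.le, hu.2.le⟩).aestronglyMeasurable)
      (hμint s₀ hs₀Icc)
      ((hμint s₀ hs₀Icc).aestronglyMeasurable.mul
        (AEMeasurable.aestronglyMeasurable ⟨L', hL'm, hLL'⟩))
      (by
        filter_upwards [hpp] with θ hθ
        intro u hu
        obtain ⟨hau, hub⟩ := hball u hu
        rw [Real.norm_eq_abs, abs_mul,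
          abs_of_pos (mul_pos (Real.rpow_pos_of_pos hθ.2 _) (Real.rpow_pos_of_pos hθ.1 _))]
        exact mul_le_mul_of_nonneg_right (geom_path_le' hθ.1 hθ.2 hau hub) (abs_nonneg _))
      (by
        refine (haS.add hbS).congr (Filter.Eventually.of_forall fun θ => ?_)
        simp only [Pi.add_apply]
        ring)
      (by
        filter_upwards [hpp] with θ hθ
        intro u _
        exact hasDerivAt_geom_path' hθ.1 hθ.2 u)
    refine ⟨hres.1, ?_⟩
    have hμeq : μc = fun u => ∫ θ, p1 θ ^ u * p0 θ ^ (1 - u) ∂ν := funext hμc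
    rw [hμeq]
    exact hres.2
  -- derivative of log ∘ μc
  have hGderiv : ∀ s ∈ Set.Ioo (0:ℝ) t,
      HasDerivAt (fun u => Real.log (μc u))
        (∫ θ, (p1 θ ^ s * p0 θ ^ (1 - s) / μc s) * Real.log (p1 θ / p0 θ) ∂ν) s := by
    intro s hs
    have hsIcc : s ∈ Set.Icc (0:ℝ) 1 := ⟨hs.1.le, (hs.2.trans ht1).le⟩
    have h1 := ((key s hs).2).log (hμpos s hsIcc).ne'
    have h2 : (∫ θ, (p1 θ ^ s * p0 θ ^ (1 - s)) * Real.log (p1 θ / p0 θ) ∂ν) / μc s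
        = ∫ θ, (p1 θ ^ s * p0 θ ^ (1 - s) / μc s) * Real.log (p1 θ / p0 θ) ∂ν := by
      rw [← integral_div]
      exact integral_congr_ae (Filter.Eventually.of_forall fun θ => by ring)
    rw [h2] at h1
    exact h1
  -- interval integrability of the inner integral
  have hint : IntervalIntegrable (fun s => ∫ θ,
      (p1 θ ^ s * p0 θ ^ (1 - s) / μc s) * Real.log (p1 θ / p0 θ) ∂ν) volume 0 t := by
    have h1 : Integrable (fun s => ∫ θ, K (s, θ) ∂ν)
        (volume.restrict (Set.Icc (0:ℝ) 1)) := hKint.integral_prod_left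
    rw [intervalIntegrable_iff_integrableOn_Ioc_of_le ht0.le]
    have h2 : IntegrableOn (fun s => ∫ θ, K (s, θ) ∂ν) (Set.Icc (0:ℝ) 1) volume := h1
    exact h2.mono_set (Set.Ioc_subset_Icc_self.trans (Set.Icc_subset_Icc le_rfl ht1.le))
  -- continuity of log ∘ μc on [0, t]
  have hμcont : ContinuousOn μc (Set.Icc (0:ℝ) 1) := by
    intro s hs
    have hμeq : μc = fun u => ∫ θ, p1 θ ^ u * p0 θ ^ (1 - u) ∂ν := funext hμc
    rw [hμeq]
    refine continuousWithinAt_of_dominated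
      (bound := fun θ => p0 θ + p1 θ)
      (eventually_mem_nhdsWithin.mono fun u hu => (hμint u hu).aestronglyMeasurable)
      ?_ (hp0i.add hp1i) ?_
    · refine eventually_mem_nhdsWithin.mono fun u hu => ?_
      filter_upwards [hpp] with θ hθ
      rw [Real.norm_eq_abs,
        abs_of_pos (mul_pos (Real.rpow_pos_of_pos hθ.2 _) (Real.rpow_pos_of_pos hθ.1 _))]
      calc p1 θ ^ u * p0 θ ^ (1 - u)
          ≤ p1 θ ^ (0:ℝ) * p0 θ ^ (1 - (0:ℝ)) + p1 θ ^ (1:ℝ) * p0 θ ^ (1 - (1:ℝ)) :=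
            geom_path_le' hθ.1 hθ.2 hu.1 hu.2
        _ = p0 θ + p1 θ := by
            rw [Real.rpow_zero, Real.rpow_one]
            norm_num
    · filter_upwards [hpp] with θ hθ
      exact ((hasDerivAt_geom_path' hθ.1 hθ.2 s).continuousAt).continuousWithinAt
  have hcont : ContinuousOn (fun s => Real.log (μc s)) (Set.Icc 0 t) := by
    refine ContinuousOn.log (hμcont.mono fun x hx => ⟨hx.1, hx.2.trans ht1.le⟩) ?_
    exact fun x hx => (hμpos x ⟨hx.1, hx.2.trans ht1.le⟩).ne'
  -- FTC
  have hFTC := intervalIntegral.integral_eq_sub_of_hasDeriv_right_of_le ht0.le hcont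
    (fun x hx => (hGderiv x hx).hasDerivWithinAt) hint
  have hμ0 : μc 0 = 1 := by
    rw [hμc 0]
    simpa using hp0int
  have hmain : (∫ s in (0:ℝ)..t, ∫ θ,
      (p1 θ ^ s * p0 θ ^ (1 - s) / μc s) * Real.log (p1 θ / p0 θ) ∂ν)
      = Real.log (μc t) := by
    rw [hFTC, hμ0, Real.log_one, sub_zero]
  exact ⟨hmain, by rw [hmain, hC, neg_neg]⟩
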